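/- Let T, T̃ ∈ R^{m×n} with ‖T − T̃‖_F ≤ ε‖T‖_F, and let S ⊆ [m] be a set of rows with |S| ≥ (1−ζ)m and ‖T_i‖² ≥ (1/(1+γ))‖T‖_F²/m for all i ∈ S, where all rows T_i, T̃_i for i ∈ S are nonzero. Then (1/|S|)·Σ_{i∈S} ‖D_{T_i} − D_{T̃_i}‖_TV ≤ 2ε√(1+γ)/(1−ζ). -/

import Mathlib

lemma norm_eq_sqrt_sum {n : ℕ} (u : EuclideanSpace ℝ (Fin n)) :
    ‖u‖ = Real.sqrt (∑ j, u j ^ 2) := by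
  rw [EuclideanSpace.norm_eq]; simp [sq_abs]

lemma norm_sq_sum {n : ℕ} (u : EuclideanSpace ℝ (Fin n)) : ‖u‖ ^ 2 = ∑ j, u j ^ 2 := by
  rw [norm_eq_sqrt_sum, Real.sq_sqrt (by positivity)]

lemma tv_aux {n : ℕ} (u v : EuclideanSpace ℝ (Fin n)) (hu : u ≠ 0) (hv : v ≠ 0) :
    (1/2) * ∑ j, |u j ^ 2 / (∑ j', u j' ^ 2) - v j ^ 2 / (∑ j', v j' ^ 2)|
      ≤ 2 * ‖u - v‖ / ‖u‖ := by
  have hA : (0:ℝ) < ‖u‖ := norm_pos_iff.2 hu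
  have hB : (0:ℝ) < ‖v‖ := norm_pos_iff.2 hv
  set a := ‖u‖ with ha
  set b := ‖v‖ with hb
  set uh : EuclideanSpace ℝ (Fin n) := a⁻¹ • u with huh
  set vh : EuclideanSpace ℝ (Fin n) := b⁻¹ • v with hvh
  have huh1 : ‖uh‖ = 1 := by
    rw [huh, norm_smul, Real.norm_eq_abs, abs_of_pos (inv_pos.2 hA), ← ha,
      inv_mul_cancel₀ hA.ne']
  have hvh1 : ‖vh‖ = 1 := by
    rw [hvh, norm_smul, Real.norm_eq_abs, abs_of_pos (inv_pos.2 hB), ← hb,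
      inv_mul_cancel₀ hB.ne']
  have hsum : ∀ j, u j ^ 2 / (∑ j', u j' ^ 2) - v j ^ 2 / (∑ j', v j' ^ 2)
      = uh j ^ 2 - vh j ^ 2 := by
    intro j
    rw [← norm_sq_sum u, ← norm_sq_sum v, ← ha, ← hb]
    have h1 : uh j = a⁻¹ * u j := by simp [huh]
    have h2 : vh j = b⁻¹ * v j := by simp [hvh]
    rw [h1, h2]
    field_simp
  have cs : ∑ j, |uh j ^ 2 - vh j ^ 2| ≤ ‖uh - vh‖ * ‖uh + vh‖ := by
    have h1 : ∀ j, |uh j ^ 2 - vh j ^ 2| = |uh j - vh j| * |uh j + vh j| := by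
      intro j; rw [← abs_mul]; ring_nf
    calc ∑ j, |uh j ^ 2 - vh j ^ 2| = ∑ j, |uh j - vh j| * |uh j + vh j| := by
          simp_rw [h1]
      _ ≤ Real.sqrt (∑ j, |uh j - vh j| ^ 2) * Real.sqrt (∑ j, |uh j + vh j| ^ 2) :=
          Real.sum_mul_le_sqrt_mul_sqrt _ _ _
      _ = ‖uh - vh‖ * ‖uh + vh‖ := by
          rw [norm_eq_sqrt_sum (uh - vh), norm_eq_sqrt_sum (uh + vh)]
          simp [sq_abs]
  have hplus : ‖uh + vh‖ ≤ 2 := by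
    calc ‖uh + vh‖ ≤ ‖uh‖ + ‖vh‖ := norm_add_le _ _
      _ = 2 := by rw [huh1, hvh1]; norm_num
  have hdiff : ‖uh - vh‖ ≤ 2 * ‖u - v‖ / a := by
    have hdecomp : uh - vh = a⁻¹ • (u - v) + (a⁻¹ - b⁻¹) • v := by
      rw [huh, hvh]; module
    have hab : |a⁻¹ - b⁻¹| * b ≤ ‖u - v‖ / a := by
      have h1 : |a⁻¹ - b⁻¹| = |b - a| / (a * b) := by
        rw [inv_sub_inv hA.ne' hB.ne', abs_div,
          abs_of_pos (show (0:ℝ) < a * b by positivity)]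
      have h2 : |b - a| ≤ ‖u - v‖ := by
        rw [ha, hb, abs_sub_comm]
        exact abs_norm_sub_norm_le u v
      rw [h1]
      rw [div_mul_eq_mul_div, div_le_div_iff₀ (by positivity) hA]
      calc |b - a| * b * a = |b - a| * (b * a) := by ring
        _ ≤ ‖u - v‖ * (a * b) := by
            rw [mul_comm b a]
            exact mul_le_mul_of_nonneg_right h2 (by positivity)
    calc ‖uh - vh‖ ≤ ‖a⁻¹ • (u - v)‖ + ‖(a⁻¹ - b⁻¹) • v‖ := by
          rw [hdecomp]; exact norm_add_le _ _
      _ = a⁻¹ * ‖u - v‖ + |a⁻¹ - b⁻¹| * b := by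
          rw [norm_smul, norm_smul, Real.norm_eq_abs, Real.norm_eq_abs,
            abs_of_pos (inv_pos.2 hA), hb]
      _ ≤ ‖u - v‖ / a + ‖u - v‖ / a := by
          rw [inv_mul_eq_div]
          exact add_le_add_right hab _
      _ = 2 * ‖u - v‖ / a := by ring
  calc (1/2) * ∑ j, |u j ^ 2 / (∑ j', u j' ^ 2) - v j ^ 2 / (∑ j', v j' ^ 2)|
      = (1/2) * ∑ j, |uh j ^ 2 - vh j ^ 2| := by simp_rw [hsum]
    _ ≤ (1/2) * (‖uh - vh‖ * ‖uh + vh‖) := by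
        apply mul_le_mul_of_nonneg_left cs (by norm_num)
    _ ≤ (1/2) * (‖uh - vh‖ * 2) := by
        apply mul_le_mul_of_nonneg_left _ (by norm_num)
        exact mul_le_mul_of_nonneg_left hplus (norm_nonneg _)
    _ = ‖uh - vh‖ := by ring
    _ ≤ 2 * ‖u - v‖ / a := hdiff

lemma tv_row {n : ℕ} (u v : Fin n → ℝ) (hu : u ≠ 0) (hv : v ≠ 0) :
    (1/2) * ∑ j, |u j ^ 2 / (∑ j', u j' ^ 2) - v j ^ 2 / (∑ j', v j' ^ 2)|
      ≤ 2 * Real.sqrt (∑ j, (u j - v j) ^ 2) / Real.sqrt (∑ j, u j ^ 2) := by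
  have h := tv_aux (WithLp.toLp 2 u : EuclideanSpace ℝ (Fin n))
    (WithLp.toLp 2 v : EuclideanSpace ℝ (Fin n)) (by simpa using hu) (by simpa using hv)
  have e1 : ‖(WithLp.toLp 2 u : EuclideanSpace ℝ (Fin n)) - (WithLp.toLp 2 v : EuclideanSpace ℝ (Fin n))‖
      = Real.sqrt (∑ j, (u j - v j) ^ 2) := by
    rw [EuclideanSpace.norm_eq]; simp [sq_abs]
  have e2 : ‖(WithLp.toLp 2 u : EuclideanSpace ℝ (Fin n))‖ = Real.sqrt (∑ j, u j ^ 2) := by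
    rw [EuclideanSpace.norm_eq]; simp [sq_abs]
  rw [e1, e2] at h
  exact h

theorem stmt_18 {m n : ℕ} (T Tt : Matrix (Fin m) (Fin n) ℝ) (S : Finset (Fin m))
    (ε γ ζ : ℝ) (hγ : 0 < γ) (hζ0 : 0 ≤ ζ) (hζ1 : ζ < 1) (hε : 0 < ε)
    (hclose : Real.sqrt (∑ i, ∑ j, (T i j - Tt i j) ^ 2)
        ≤ ε * Real.sqrt (∑ i, ∑ j, T i j ^ 2))
    (hcard : (1 - ζ) * m ≤ (S.card : ℝ))
    (hrow : ∀ i ∈ S, (1 / (1 + γ)) * (∑ i', ∑ j, T i' j ^ 2) / m ≤ ∑ j, T i j ^ 2)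
    (hTne : ∀ i ∈ S, (fun j => T i j) ≠ 0)
    (hTtne : ∀ i ∈ S, (fun j => Tt i j) ≠ 0) :
    (1 / (S.card : ℝ)) * ∑ i ∈ S,
        (1 / 2) * ∑ j, |T i j ^ 2 / (∑ j', T i j' ^ 2) - Tt i j ^ 2 / (∑ j', Tt i j' ^ 2)|
      ≤ 2 * ε * Real.sqrt (1 + γ) / (1 - ζ) := by
  have hζ : (0:ℝ) < 1 - ζ := by linarith
  have hRHS : 0 ≤ 2 * ε * Real.sqrt (1 + γ) / (1 - ζ) :=
    div_nonneg (by positivity) hζ.le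
  rcases S.eq_empty_or_nonempty with hSe | hSne
  · simpa [hSe] using hRHS
  obtain ⟨i₀, hi₀⟩ := hSne
  set F2 := ∑ i', ∑ j, T i' j ^ 2 with hF2
  have hrowpos : ∀ i ∈ S, 0 < ∑ j, T i j ^ 2 := by
    intro i hi
    have hne := hTne i hi
    have hex : ∃ j, T i j ≠ 0 := by
      by_contra h; push_neg at h; exact hne (funext h)
    obtain ⟨j, hj⟩ := hex
    exact lt_of_lt_of_le (by positivity)
      (Finset.single_le_sum (fun k _ => sq_nonneg (T i k)) (Finset.mem_univ j))
  have hF2pos : 0 < F2 := by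
    rw [hF2]
    exact lt_of_lt_of_le (hrowpos i₀ hi₀)
      (Finset.single_le_sum (f := fun i' => ∑ j, T i' j ^ 2)
        (fun k _ => Finset.sum_nonneg fun _ _ => sq_nonneg _) (Finset.mem_univ i₀))
  set F := Real.sqrt F2 with hF
  have hFpos : 0 < F := Real.sqrt_pos.2 hF2pos
  have hm : (0:ℝ) < m := by exact_mod_cast i₀.pos
  set s := Real.sqrt ((1 + γ) * m) with hs
  have hspos : 0 < s := Real.sqrt_pos.2 (by positivity)
  have hScard : (0:ℝ) < S.card := by
    exact_mod_cast Finset.card_pos.2 ⟨i₀, hi₀⟩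
  have hsS : 0 < Real.sqrt S.card := Real.sqrt_pos.2 hScard
  -- per-row norm lower bound
  have hnorm : ∀ i ∈ S, F / s ≤ Real.sqrt (∑ j, T i j ^ 2) := by
    intro i hi
    have h1 : F2 / ((1 + γ) * m) ≤ ∑ j, T i j ^ 2 := by
      have := hrow i hi
      rw [hF2]
      calc F2 / ((1 + γ) * m) = (1 / (1 + γ)) * F2 / m := by
            field_simp
        _ ≤ ∑ j, T i j ^ 2 := this
    calc F / s = Real.sqrt (F2 / ((1 + γ) * m)) := by
          rw [hF, hs, Real.sqrt_div hF2pos.le]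
      _ ≤ Real.sqrt (∑ j, T i j ^ 2) := Real.sqrt_le_sqrt h1
  -- per-row TV bound
  set E : Fin m → ℝ := fun i => Real.sqrt (∑ j, (T i j - Tt i j) ^ 2) with hE
  have hEnn : ∀ i, 0 ≤ E i := fun i => Real.sqrt_nonneg _
  have step : ∀ i ∈ S,
      (1 / 2) * ∑ j, |T i j ^ 2 / (∑ j', T i j' ^ 2) - Tt i j ^ 2 / (∑ j', Tt i j' ^ 2)|
        ≤ (2 * s / F) * E i := by
    intro i hi
    have h1 := tv_row (fun j => T i j) (fun j => Tt i j) (hTne i hi) (hTtne i hi)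
    calc (1 / 2) * ∑ j, |T i j ^ 2 / (∑ j', T i j' ^ 2) - Tt i j ^ 2 / (∑ j', Tt i j' ^ 2)|
        ≤ 2 * E i / Real.sqrt (∑ j, T i j ^ 2) := h1
      _ ≤ 2 * E i / (F / s) := by
          apply div_le_div_of_nonneg_left (by positivity) (by positivity) (hnorm i hi)
      _ = (2 * s / F) * E i := by
          rw [div_div_eq_mul_div]
          ring
  -- Cauchy-Schwarz over rows
  have sumE : ∑ i ∈ S, E i ≤ Real.sqrt S.card * (ε * F) := by
    have cs : ∑ i ∈ S, E i ≤ Real.sqrt (∑ i ∈ S, (1:ℝ)) * Real.sqrt (∑ i ∈ S, E i ^ 2) := by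
      have := Real.sum_mul_le_sqrt_mul_sqrt S (fun _ => (1:ℝ)) E
      simpa using this
    have h1 : Real.sqrt (∑ i ∈ S, (1:ℝ)) = Real.sqrt S.card := by
      rw [Finset.sum_const]; norm_num
    have h2 : ∑ i ∈ S, E i ^ 2 = ∑ i ∈ S, ∑ j, (T i j - Tt i j) ^ 2 := by
      apply Finset.sum_congr rfl
      intro i _
      rw [hE, Real.sq_sqrt (by positivity)]
    have h3 : Real.sqrt (∑ i ∈ S, E i ^ 2) ≤ ε * F := by
      rw [h2]
      refine le_trans (Real.sqrt_le_sqrt ?_) hclose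
      exact Finset.sum_le_sum_of_subset_of_nonneg (Finset.subset_univ S)
        (fun i _ _ => Finset.sum_nonneg fun _ _ => sq_nonneg _)
    calc ∑ i ∈ S, E i ≤ Real.sqrt (∑ i ∈ S, (1:ℝ)) * Real.sqrt (∑ i ∈ S, E i ^ 2) := cs
      _ = Real.sqrt S.card * Real.sqrt (∑ i ∈ S, E i ^ 2) := by rw [h1]
      _ ≤ Real.sqrt S.card * (ε * F) := mul_le_mul_of_nonneg_left h3 hsS.le
  -- put together
  have main : (1 / (S.card : ℝ)) * ∑ i ∈ S,
        (1 / 2) * ∑ j, |T i j ^ 2 / (∑ j', T i j' ^ 2) - Tt i j ^ 2 / (∑ j', Tt i j' ^ 2)|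
      ≤ 2 * ε * s / Real.sqrt S.card := by
    have hSsq : (S.card : ℝ) = Real.sqrt S.card * Real.sqrt S.card :=
      (Real.mul_self_sqrt hScard.le).symm
    calc (1 / (S.card : ℝ)) * ∑ i ∈ S,
          (1 / 2) * ∑ j, |T i j ^ 2 / (∑ j', T i j' ^ 2) - Tt i j ^ 2 / (∑ j', Tt i j' ^ 2)|
        ≤ (1 / (S.card : ℝ)) * ∑ i ∈ S, (2 * s / F) * E i := by
          apply mul_le_mul_of_nonneg_left (Finset.sum_le_sum step) (one_div_nonneg.2 hScard.le)
      _ = (1 / (S.card : ℝ)) * ((2 * s / F) * ∑ i ∈ S, E i) := by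
          rw [← Finset.mul_sum]
      _ ≤ (1 / (S.card : ℝ)) * ((2 * s / F) * (Real.sqrt S.card * (ε * F))) := by
          apply mul_le_mul_of_nonneg_left _ (one_div_nonneg.2 hScard.le)
          exact mul_le_mul_of_nonneg_left sumE (by positivity)
      _ = 2 * ε * s / Real.sqrt S.card := by
          rw [hSsq]
          clear hSsq
          field_simp
          ring_nf
          rw [Real.sq_sqrt hScard.le]
          rw [Real.sq_sqrt hScard.le]
  refine le_trans main ?_
  -- final arithmetic
  have hsplit : s = Real.sqrt (1 + γ) * Real.sqrt m := by
    rw [hs, Real.sqrt_mul (by positivity)]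
  have hfrac : Real.sqrt m / Real.sqrt S.card ≤ 1 / (1 - ζ) := by
    rw [div_le_div_iff₀ hsS hζ, one_mul]
    have h1 : (1 - ζ) * Real.sqrt m = Real.sqrt ((1 - ζ) ^ 2 * m) := by
      rw [Real.sqrt_mul (sq_nonneg _), Real.sqrt_sq hζ.le]
    rw [mul_comm, h1]
    apply Real.sqrt_le_sqrt
    calc (1 - ζ) ^ 2 * m ≤ (1 - ζ) * m := by nlinarith [mul_nonneg (mul_nonneg hζ0 hζ.le) hm.le]
      _ ≤ S.card := hcard
  calc 2 * ε * s / Real.sqrt S.card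
      = (2 * ε * Real.sqrt (1 + γ)) * (Real.sqrt m / Real.sqrt S.card) := by
        rw [hsplit]; ring
    _ ≤ (2 * ε * Real.sqrt (1 + γ)) * (1 / (1 - ζ)) := by
        apply mul_le_mul_of_nonneg_left hfrac (by positivity)
    _ = 2 * ε * Real.sqrt (1 + γ) / (1 - ζ) := by ring
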